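/- Let ϰ ∈ ℝ and let two states (ρ_L, u_L, ε_L, p_L, θ_L, j_L) and (ρ_R, u_R, ε_R, p_R, θ_R, j_R) with ρ_L, ρ_R > 0 and a discontinuity speed 𝒟 be given; set v_i = 1/ρ_i and suppose the mass flux ℳ := ρ_L(u_L − 𝒟) = ρ_R(u_R − 𝒟) satisfies ℳ ≠ 0. Assume the Rankine–Hugoniot conditions: p_R + ℳ²v_R = p_L + ℳ²v_L; ℳ(ℳ²v_R²/2 + ε_R + p_R v_R + (ϰ²/2)v_R²j_R²) + ϰ²v_Rθ_Rj_R = ℳ(ℳ²v_L²/2 + ε_L + p_L v_L + (ϰ²/2)v_L²j_L²) + ϰ²v_Lθ_Lj_L; and ℳ v_R j_R + θ_R = ℳ v_L j_L + θ_L. If moreover p_R ≠ p_L, then v_R ≠ v_L, ℳ² = −(p_R − p_L)/(v_R − v_L), and the Hugoniot relation holds: ε_R − ε_L + (1/2)(p_R + p_L)(v_R − v_L) + (ϰ²/2)(v_R − v_L)(θ_R² − θ_L²)/(p_R − p_L) = 0. -/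

import Mathlib

/-- Consequence of the Rankine–Hugoniot conditions of the hyperbolic heat-conduction model
(with `α(ρ) = ϰ²/ρ`) across a discontinuity with nonzero mass flux `ℳ`: if `p_R ≠ p_L` then
`v_R ≠ v_L`, `ℳ² = −⟦p⟧/⟦v⟧`, and the Hugoniot relation
`ε_R − ε_L + ½(p_R+p_L)(v_R−v_L) + (ϰ²/2)(v_R−v_L)(θ_R²−θ_L²)/(p_R−p_L) = 0` holds. -/
theorem stmt_12 (ϰ D M ρL uL εL pL θL jL ρR uR εR pR θR jR vL vR : ℝ)
    (hρL : 0 < ρL) (hρR : 0 < ρR)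
    (hvL : vL = 1 / ρL) (hvR : vR = 1 / ρR)
    (hML : M = ρL * (uL - D)) (hMR : M = ρR * (uR - D)) (hM : M ≠ 0)
    (hmom : pR + M ^ 2 * vR = pL + M ^ 2 * vL)
    (hene : M * (M ^ 2 * vR ^ 2 / 2 + εR + pR * vR + (ϰ ^ 2 / 2) * vR ^ 2 * jR ^ 2)
        + ϰ ^ 2 * vR * θR * jR
      = M * (M ^ 2 * vL ^ 2 / 2 + εL + pL * vL + (ϰ ^ 2 / 2) * vL ^ 2 * jL ^ 2)
        + ϰ ^ 2 * vL * θL * jL)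
    (hj : M * vR * jR + θR = M * vL * jL + θL)
    (hp : pR ≠ pL) :
    vR ≠ vL ∧ M ^ 2 = -(pR - pL) / (vR - vL) ∧
    εR - εL + (1 / 2) * (pR + pL) * (vR - vL)
      + (ϰ ^ 2 / 2) * (vR - vL) * (θR ^ 2 - θL ^ 2) / (pR - pL) = 0 := by
  have hΔ : M ^ 2 * (vR - vL) = -(pR - pL) := by ring_nf; linarith
  have hv : vR ≠ vL := by
    intro h
    apply hp
    rw [h] at hmom
    linarith
  have hvne : vR - vL ≠ 0 := sub_ne_zero.mpr hv
  have hpne : pR - pL ≠ 0 := sub_ne_zero.mpr hp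
  have key : 2*M^2*(εR-εL) + M^4*(vR^2-vL^2) + 2*M^2*(pR*vR-pL*vL)
      + ϰ^2*(θL^2-θR^2) = 0 := by
    linear_combination (2*M)*hene - ϰ^2*(M*vR*jR + M*vL*jL + θR + θL)*hj
  refine ⟨hv, ?_, ?_⟩
  · field_simp
    linarith [hΔ]
  · have hM2 : M ^ 2 ≠ 0 := pow_ne_zero 2 hM
    have h3 : (2*M^2) * ((pR-pL)*(εR-εL) + (pR-pL)*(pR+pL)*(vR-vL)/2
        + ϰ^2*(vR-vL)*(θR^2-θL^2)/2) = 0 := by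
      linear_combination (pR-pL)*key + (ϰ^2*(θR^2-θL^2) - M^2*(pR-pL)*(vR+vL))*hΔ
    have h2 : (2:ℝ)*M^2 ≠ 0 := by positivity
    have hX : (pR-pL)*(εR-εL) + (pR-pL)*(pR+pL)*(vR-vL)/2
        + ϰ^2*(vR-vL)*(θR^2-θL^2)/2 = 0 := by
      rcases mul_eq_zero.mp h3 with h | h
      · exact absurd h h2
      · exact h
    field_simp
    linear_combination 2*hX
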